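/- Let f : ℝⁿ → ℝ be a C² function that is bounded together with all its second derivatives. Then ‖∂f‖_{L^∞} ≤ C ‖f‖_{L^∞}^{1/2} ‖∂²f‖_{L^∞}^{1/2} for a constant C depending only on n. -/

import Mathlib

open Set

lemma key_estimate {E : Type*} [NormedAddCommGroup E] [NormedSpace ℝ E]
    (f : E → ℝ) (hf : ContDiff ℝ 2 f) (M₀ M₂ : ℝ)
    (h0 : ∀ x, |f x| ≤ M₀) (h2 : ∀ x, ‖iteratedFDeriv ℝ 2 f x‖ ≤ M₂)
    (x u : E) (t : ℝ) (ht : 0 < t) :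
    |fderiv ℝ f x u| ≤ 2 * M₀ / t + M₂ * ‖u‖ ^ 2 * t := by
  set γ : ℝ → E := fun s => x + s • u with hγdef
  have hγ : ∀ s : ℝ, HasDerivAt γ u s := by
    intro s
    simpa [hγdef] using ((hasDerivAt_id s).smul_const u).const_add x
  have hfd : Differentiable ℝ f := hf.differentiable two_ne_zero
  have hf' : ContDiff ℝ 1 (fderiv ℝ f) := hf.fderiv_right (by norm_num)
  have hfd' : Differentiable ℝ (fderiv ℝ f) := hf'.differentiable one_ne_zero
  set ψ : ℝ → ℝ := fun s => fderiv ℝ f (γ s) u with hψdef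
  have hψ : ∀ s : ℝ, HasDerivAt ψ (fderiv ℝ (fderiv ℝ f) (γ s) u u) s := by
    intro s
    have h1 : HasDerivAt (fun s => fderiv ℝ f (γ s)) (fderiv ℝ (fderiv ℝ f) (γ s) u) s :=
      (hfd' (γ s)).hasFDerivAt.comp_hasDerivAt s (hγ s)
    simpa using h1.clm_apply (hasDerivAt_const s u)
  have hM₂ : 0 ≤ M₂ := (norm_nonneg _).trans (h2 x)
  have hK : 0 ≤ M₂ * ‖u‖ ^ 2 := by positivity
  have hbound : ∀ s : ℝ, ‖fderiv ℝ (fderiv ℝ f) (γ s) u u‖ ≤ M₂ * ‖u‖ ^ 2 := by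
    intro s
    have he : iteratedFDeriv ℝ 2 f (γ s) ![u, u] = fderiv ℝ (fderiv ℝ f) (γ s) u u :=
      iteratedFDeriv_two_apply f (γ s) ![u, u]
    rw [← he]
    calc ‖iteratedFDeriv ℝ 2 f (γ s) ![u, u]‖
        ≤ ‖iteratedFDeriv ℝ 2 f (γ s)‖ * ∏ i : Fin 2, ‖(![u, u]) i‖ :=
          (iteratedFDeriv ℝ 2 f (γ s)).le_opNorm _
      _ = ‖iteratedFDeriv ℝ 2 f (γ s)‖ * (‖u‖ * ‖u‖) := by
          simp [Fin.prod_univ_two]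
      _ ≤ M₂ * ‖u‖ ^ 2 := by
          have := h2 (γ s)
          nlinarith [norm_nonneg u, norm_nonneg (iteratedFDeriv ℝ 2 f (γ s))]
  set g : ℝ → ℝ := fun s => f (γ s) with hgdef
  have hg : ∀ s : ℝ, HasDerivAt g (ψ s) s := fun s =>
    (hfd (γ s)).hasFDerivAt.comp_hasDerivAt s (hγ s)
  obtain ⟨c, hc, hceq⟩ := exists_hasDerivAt_eq_slope g ψ ht
    (fun s _ => (hg s).continuousAt.continuousWithinAt) (fun s _ => hg s)
  have hM₀ : 0 ≤ M₀ := (abs_nonneg _).trans (h0 x)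
  have hψc : |ψ c| ≤ 2 * M₀ / t := by
    rw [hceq, sub_zero, abs_div, abs_of_pos ht]
    have hnum : |g t - g 0| ≤ 2 * M₀ := by
      rw [sub_eq_add_neg]
      refine (abs_add_le _ _).trans ?_
      rw [abs_neg]
      linarith [h0 (γ t), h0 (γ 0)]
    gcongr
  have hψ0c : |ψ 0 - ψ c| ≤ M₂ * ‖u‖ ^ 2 * t := by
    have hlip := Convex.norm_image_sub_le_of_norm_hasDerivWithin_le
      (f := ψ) (f' := fun s => fderiv ℝ (fderiv ℝ f) (γ s) u u) (s := univ)
      (fun s _ => (hψ s).hasDerivWithinAt) (fun s _ => hbound s) convex_univ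
      (mem_univ c) (mem_univ 0)
    calc |ψ 0 - ψ c| ≤ M₂ * ‖u‖ ^ 2 * ‖(0:ℝ) - c‖ := hlip
      _ ≤ M₂ * ‖u‖ ^ 2 * t := by
          rw [zero_sub, norm_neg, Real.norm_eq_abs, abs_of_pos hc.1]
          exact mul_le_mul_of_nonneg_left hc.2.le hK
  have hψ0 : ψ 0 = fderiv ℝ f x u := by simp [hψdef, hγdef]
  calc |fderiv ℝ f x u| = |ψ c + (ψ 0 - ψ c)| := by rw [← hψ0]; ring_nf
    _ ≤ |ψ c| + |ψ 0 - ψ c| := abs_add_le _ _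
    _ ≤ 2 * M₀ / t + M₂ * ‖u‖ ^ 2 * t := add_le_add hψc hψ0c

/-- Gradient (Landau–Kolmogorov) inequality: for `f : ℝⁿ → ℝ` of class `C²`,
bounded together with its second derivatives,
`‖∂f‖_{L^∞} ≤ C ‖f‖_{L^∞}^{1/2} ‖∂²f‖_{L^∞}^{1/2}` with `C` depending only on `n`. -/
theorem gradient_interpolation_inequality (n : ℕ) :
    ∃ C > 0, ∀ (f : EuclideanSpace ℝ (Fin n) → ℝ) (M₀ M₂ : ℝ),
      ContDiff ℝ 2 f →
      (∀ x, |f x| ≤ M₀) →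
      (∀ x, ‖iteratedFDeriv ℝ 2 f x‖ ≤ M₂) →
      ∀ x, ‖fderiv ℝ f x‖ ≤ C * Real.sqrt M₀ * Real.sqrt M₂ := by
  refine ⟨3, by norm_num, fun f M₀ M₂ hf h0 h2 x => ?_⟩
  have hM₀ : 0 ≤ M₀ := (abs_nonneg _).trans (h0 0)
  have hM₂ : 0 ≤ M₂ := (norm_nonneg _).trans (h2 0)
  have hRHS : 0 ≤ 3 * Real.sqrt M₀ * Real.sqrt M₂ := by positivity
  refine ContinuousLinearMap.opNorm_le_bound _ hRHS fun u => ?_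
  rw [Real.norm_eq_abs]
  rcases eq_or_lt_of_le hM₀ with hM₀0 | hM₀pos
  · -- M₀ = 0, so f = 0
    have hf0 : f = fun _ => (0 : ℝ) := by
      funext y
      have := h0 y
      rw [← hM₀0] at this
      exact abs_nonpos_iff.mp this
    rw [hf0, fderiv_fun_const]
    simp [hRHS, mul_nonneg hRHS (norm_nonneg u)]
  rcases eq_or_ne u 0 with hu | hu
  · simp [hu, mul_nonneg hRHS (norm_nonneg u)]
  have hunorm : 0 < ‖u‖ := norm_pos_iff.mpr hu
  rcases eq_or_lt_of_le hM₂ with hM₂0 | hM₂pos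
  · -- M₂ = 0: |fderiv f x u| ≤ 2M₀/t for all t > 0, hence ≤ 0
    have hle : ∀ t : ℝ, 0 < t → |fderiv ℝ f x u| ≤ 2 * M₀ / t := by
      intro t ht
      have := key_estimate f hf M₀ M₂ h0 h2 x u t ht
      rw [← hM₂0] at this
      simpa using this
    by_contra hcon
    push_neg at hcon
    have hpos : 0 < |fderiv ℝ f x u| := lt_of_le_of_lt (by positivity) hcon
    have ht : 0 < 4 * M₀ / |fderiv ℝ f x u| := by positivity
    have := hle _ ht
    have heq : 2 * M₀ / (4 * M₀ / |fderiv ℝ f x u|) = |fderiv ℝ f x u| / 2 := by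
      field_simp
      ring
    rw [heq] at this
    linarith
  · -- main case
    set a := Real.sqrt M₀ with hadef
    set b := Real.sqrt M₂ with hbdef
    have hs0 : 0 < a := Real.sqrt_pos.mpr hM₀pos
    have hs2 : 0 < b := Real.sqrt_pos.mpr hM₂pos
    have hs0sq : a ^ 2 = M₀ := Real.sq_sqrt hM₀
    have hs2sq : b ^ 2 = M₂ := Real.sq_sqrt hM₂
    have ht : 0 < a / (b * ‖u‖) := by positivity
    have hkey := key_estimate f hf M₀ M₂ h0 h2 x u (a / (b * ‖u‖)) ht
    have heq : 2 * M₀ / (a / (b * ‖u‖)) + M₂ * ‖u‖ ^ 2 * (a / (b * ‖u‖))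
        = 3 * a * b * ‖u‖ := by
      rw [← hs0sq, ← hs2sq]
      field_simp
      ring
    rw [heq] at hkey
    exact hkey
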